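/- For q = n/(n+2) with n > 0, the maximum of f(x) = x^{(1/x)^{log₂√(1/q)}} over x > 0 is at most 2^{n+2}. -/

import Mathlib

/-- for q = n/(n+2), n > 0, f(x) = x^{(1/x)^{log₂√(1/q)}} ≤ 2^{n+2}
    for all x > 0. -/
theorem stmt8 (n q : ℝ) (hn : 0 < n) (hq : q = n / (n + 2)) (x : ℝ) (hx : 0 < x) :
    x ^ ((1 / x) ^ Real.logb 2 (Real.sqrt (1 / q))) ≤ (2 : ℝ) ^ (n + 2) := by
  have hn2 : (0:ℝ) < n + 2 := by linarith
  have hq0 : 0 < q := by rw [hq]; positivity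
  have hq1 : q < 1 := by rw [hq, div_lt_one hn2]; linarith
  have hlog2 : 0 < Real.log 2 := Real.log_pos one_lt_two
  set c := Real.logb 2 (Real.sqrt (1/q)) with hc
  have hcval : c = Real.log (1/q) / (2 * Real.log 2) := by
    rw [hc, Real.logb, Real.log_sqrt (by positivity)]
    ring
  have hlogq : 2 / (n + 2) ≤ Real.log (1/q) := by
    have h1 := Real.log_le_sub_one_of_pos hq0
    have h2 : Real.log (1/q) = - Real.log q := by rw [one_div, Real.log_inv]
    have h3 : q - 1 = -(2/(n+2)) := by rw [hq]; field_simp; ring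
    linarith
  have hlogq0 : 0 < Real.log (1/q) := lt_of_lt_of_le (by positivity) hlogq
  have hc0 : 0 < c := by rw [hcval]; positivity
  have hcbig : 1 / c ≤ (n + 2) * Real.log 2 := by
    rw [div_le_iff₀ hc0, hcval]
    have h4 : (n+2) * Real.log 2 * (Real.log (1/q) / (2 * Real.log 2))
        = (n+2) * Real.log (1/q) / 2 := by
      field_simp
    have h5 : (n+2) * (2/(n+2)) = 2 := by field_simp
    nlinarith [mul_le_mul_of_nonneg_left hlogq hn2.le]
  -- rewrite the inner power
  have hinner : (1 / x) ^ c = (x ^ c)⁻¹ := by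
    rw [one_div, Real.inv_rpow hx.le]
  have hxc0 : 0 < x ^ c := Real.rpow_pos_of_pos hx c
  -- key: (x^c)⁻¹ * log x ≤ 1/c
  have hkey : (x ^ c)⁻¹ * Real.log x ≤ 1 / c := by
    have h1 : Real.log (x ^ c) ≤ x ^ c - 1 := Real.log_le_sub_one_of_pos hxc0
    have h2 : Real.log (x ^ c) = c * Real.log x := Real.log_rpow hx c
    rw [inv_mul_le_iff₀ hxc0, mul_one_div, le_div_iff₀ hc0]
    nlinarith
  have hexp : (x ^ c)⁻¹ * Real.log x ≤ (n + 2) * Real.log 2 :=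
    le_trans hkey hcbig
  rw [hinner]
  calc x ^ (x ^ c)⁻¹ = Real.exp ((x ^ c)⁻¹ * Real.log x) := by
        rw [Real.rpow_def_of_pos hx, mul_comm]
    _ ≤ Real.exp ((n + 2) * Real.log 2) := Real.exp_le_exp.mpr hexp
    _ = (2:ℝ) ^ (n + 2) := by
        rw [mul_comm, Real.exp_mul, Real.exp_log (by norm_num)]
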